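/- Let A be an associative algebra over a field of characteristic p > 2, and let e(u) = Σ_{r≥1} e^{(r)} u^{-r} satisfy (u-v)[e(u), e(v)] = c(e(v)-e(u))^2 with c ∈ {1, 1/2}. Then (ad e(u))^p (e(v)) = 0, i.e. (u-v)^p (ad e(u))^p(e(v)) = p! c^p (e(v)-e(u))^{p+1} = 0 in A[[u^{-1},v^{-1}]]. -/

import Mathlib

noncomputable section

/-- The series `Σ_{r} f^{(r)} u^{-r}` viewed in `A[[u⁻¹, v⁻¹]]`, where the first
power-series variable (index `0`) plays the role of `u⁻¹` and the second
(index `1`) the role of `v⁻¹`. -/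
def Useries {A : Type*} [Ring A] (f : ℕ → A) : MvPowerSeries (Fin 2) A :=
  fun d => if d 1 = 0 then f (d 0) else 0

/-- The series `Σ_{r} f^{(r)} v^{-r}` viewed in `A[[u⁻¹, v⁻¹]]`. -/
def Vseries {A : Type*} [Ring A] (f : ℕ → A) : MvPowerSeries (Fin 2) A :=
  fun d => if d 0 = 0 then f (d 1) else 0

/-- `u⁻¹` as an element of `A[[u⁻¹, v⁻¹]]`. -/
def Xu {A : Type*} [Ring A] : MvPowerSeries (Fin 2) A := MvPowerSeries.X 0

/-- `v⁻¹` as an element of `A[[u⁻¹, v⁻¹]]`. -/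
def Xv {A : Type*} [Ring A] : MvPowerSeries (Fin 2) A := MvPowerSeries.X 1

section Aux

variable {A : Type*} [Ring A]

open MvPowerSeries

lemma coeff_X_mul' (s : Fin 2) (f : MvPowerSeries (Fin 2) A) (m : Fin 2 →₀ ℕ) :
    coeff m (X s * f) =
      if Finsupp.single s 1 ≤ m then coeff (m - Finsupp.single s 1) f else 0 := by
  rw [X_def, coeff_monomial_mul]
  split <;> simp

/-- `Xv - Xu` is a left non-zero-divisor. -/
lemma wreg (f : MvPowerSeries (Fin 2) A) (h : (Xv - Xu) * f = 0) : f = 0 := by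
  have key : ∀ m, coeff m (X (1 : Fin 2) * f) = coeff m (X (0 : Fin 2) * f) := by
    intro m
    have := congrArg (coeff m) h
    rw [Xv, Xu, sub_mul] at this
    simpa [sub_eq_zero] using this
  have H : ∀ n (m : Fin 2 →₀ ℕ), m 1 = n → coeff m f = 0 := by
    intro n
    induction n with
    | zero =>
      intro m hm
      have h0 : coeff (m + Finsupp.single 0 1) (X (0 : Fin 2) * f) = coeff m f := by
        rw [coeff_X_mul', if_pos le_add_self, add_tsub_cancel_right]
      have h1 : coeff (m + Finsupp.single 0 1) (X (1 : Fin 2) * f) = 0 := by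
        rw [coeff_X_mul', if_neg]
        rw [Finsupp.single_le_iff]
        simp [hm]
      rw [← h0, ← key, h1]
    | succ n ih =>
      intro m hm
      have h0 : coeff (m + Finsupp.single 0 1) (X (0 : Fin 2) * f) = coeff m f := by
        rw [coeff_X_mul', if_pos le_add_self, add_tsub_cancel_right]
      have hle : Finsupp.single (1 : Fin 2) 1 ≤ m + Finsupp.single 0 1 := by
        rw [Finsupp.single_le_iff]
        simp [hm]
      have h1 : coeff (m + Finsupp.single 0 1) (X (1 : Fin 2) * f) = 0 := by
        rw [coeff_X_mul', if_pos hle]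
        apply ih
        rw [Finsupp.tsub_apply, Finsupp.add_apply]
        simp [hm]
      rw [← h0, ← key, h1]
  ext m
  simpa using H (m 1) m rfl

lemma wpow_reg (n : ℕ) (f : MvPowerSeries (Fin 2) A) (h : (Xv - Xu) ^ n * f = 0) : f = 0 := by
  induction n with
  | zero => simpa using h
  | succ n ih =>
    exact ih (wreg _ (by rwa [pow_succ', mul_assoc] at h))

lemma commXu (f : MvPowerSeries (Fin 2) A) : Commute Xu f := (commute_X f 0).symm
lemma commXv (f : MvPowerSeries (Fin 2) A) : Commute Xv f := (commute_X f 1).symm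
lemma commW (f : MvPowerSeries (Fin 2) A) : Commute (Xv - Xu) f :=
  (commXv f).sub_left (commXu f)
lemma commZ (f : MvPowerSeries (Fin 2) A) : Commute (Xu * Xv) f :=
  (commXu f).mul_left (commXv f)

lemma leibniz (x a b : MvPowerSeries (Fin 2) A) :
    ⁅x, a * b⁆ = ⁅x, a⁆ * b + a * ⁅x, b⁆ := by
  simp only [Ring.lie_def]
  noncomm_ring

/-- a central element can be moved in and out of brackets -/
lemma central_mul_lie (g x y : MvPowerSeries (Fin 2) A) (hg : ∀ f, Commute g f) :
    g * ⁅x, y⁆ = ⁅x, g * y⁆ := by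
  simp only [Ring.lie_def, mul_sub]
  congr 1
  · rw [← mul_assoc, (hg x).eq, mul_assoc]
  · rw [mul_assoc]

end Aux

lemma lie_smul_k {k A : Type*} [Field k] [Ring A] [Algebra k A] (t : k)
    (x m : MvPowerSeries (Fin 2) A) : ⁅x, t • m⁆ = t • ⁅x, m⁆ := by
  rw [Ring.lie_def, Ring.lie_def, mul_smul_comm, smul_mul_assoc, smul_sub]

theorem stmt9 {k A : Type*} [Field k] [Ring A] [Algebra k A]
    (p : ℕ) [Fact p.Prime] [CharP k p] (hp : 2 < p)
    (c : k) (hc : c = 1 ∨ c = 1 / 2) (e : ℕ → A) (he0 : e 0 = 0)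
    (hee : (Xv - Xu) * ⁅Useries e, Vseries e⁆ =
      c • (Xu * Xv * (Vseries e - Useries e) ^ 2)) :
    (fun S : MvPowerSeries (Fin 2) A => ⁅Useries e, S⁆)^[p] (Vseries e) = 0 := by
  set U := Useries e with hU
  set V := Vseries e with hV
  set S := V - U with hS
  set B := ⁅U, V⁆ with hB
  set w : MvPowerSeries (Fin 2) A := Xv - Xu with hw
  set z : MvPowerSeries (Fin 2) A := Xu * Xv with hz
  have hcw : ∀ f : MvPowerSeries (Fin 2) A, Commute w f := fun f => by
    rw [hw]; exact commW f
  have hcz : ∀ f : MvPowerSeries (Fin 2) A, Commute z f := fun f => by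
    rw [hz]; exact commZ f
  have hwr : ∀ n (f : MvPowerSeries (Fin 2) A), w ^ n * f = 0 → f = 0 := fun n f h => by
    rw [hw] at h; exact wpow_reg n f h
  have hee' : w * B = c • (z * S ^ 2) := hee
  -- S commutes with B
  have hSB : Commute S B := by
    have h1 : w * ⁅S, B⁆ = 0 := by
      rw [central_mul_lie w S B hcw, hee', lie_smul_k]
      have : ⁅S, z * S ^ 2⁆ = 0 := by
        have hc2 : Commute S (z * S ^ 2) :=
          ((hcz S).symm).mul_right ((Commute.refl S).pow_right 2)
        rw [Ring.lie_def, hc2.eq, sub_self]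
      rw [this, smul_zero]
    have := hwr 1 _ (by rwa [pow_one])
    rwa [Ring.lie_def, sub_eq_zero] at this
  have hUS : ⁅U, S⁆ = B := by rw [hS, hB, Ring.lie_def, Ring.lie_def]; noncomm_ring
  -- bracket with powers of S
  have hpow : ∀ n : ℕ, ⁅U, S ^ (n + 1)⁆ = (n + 1) • (S ^ n * B) := by
    intro n
    induction n with
    | zero => simpa using hUS
    | succ n ih =>
      rw [pow_succ', leibniz, hUS, ih, mul_smul_comm, ← mul_assoc, ← pow_succ',
        ← (hSB.pow_left (n + 1)).eq, succ_nsmul (S ^ (n + 1) * B) (n + 1), add_comm]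
  -- main induction
  have main : ∀ n : ℕ, w ^ (n + 1) * (fun x : MvPowerSeries (Fin 2) A => ⁅U, x⁆)^[n + 1] V
      = (((n + 1).factorial : k) * c ^ (n + 1)) • (z ^ (n + 1) * S ^ (n + 2)) := by
    intro n
    induction n with
    | zero =>
      simpa only [zero_add, pow_one, Function.iterate_one, Nat.factorial_one,
        Nat.cast_one, one_mul] using hee'
    | succ n ih =>
      rw [Function.iterate_succ_apply']
      have step : w * ⁅U, S ^ (n + 2)⁆ = ((n + 2 : ℕ) : k) • (c • (z * S ^ (n + 3))) := by
        rw [hpow (n + 1), mul_smul_comm, Nat.cast_smul_eq_nsmul]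
        congr 1
        rw [← mul_assoc, (hcw (S ^ (n + 1))).eq, mul_assoc, hee', mul_smul_comm]
        congr 1
        rw [← mul_assoc, ← (hcz (S ^ (n + 1))).eq, mul_assoc, ← pow_add]
      calc w ^ (n + 2) * ⁅U, (fun x : MvPowerSeries (Fin 2) A => ⁅U, x⁆)^[n + 1] V⁆
          = w * ⁅U, w ^ (n + 1) * (fun x : MvPowerSeries (Fin 2) A => ⁅U, x⁆)^[n + 1] V⁆ := by
            rw [pow_succ', mul_assoc,
              central_mul_lie (w ^ (n + 1)) U _ (fun f => (hcw f).pow_left (n + 1))]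
        _ = w * ⁅U, (((n + 1).factorial : k) * c ^ (n + 1)) • (z ^ (n + 1) * S ^ (n + 2))⁆ := by
            rw [ih]
        _ = (((n + 1).factorial : k) * c ^ (n + 1)) • (z ^ (n + 1) * (w * ⁅U, S ^ (n + 2)⁆)) := by
            rw [lie_smul_k, mul_smul_comm,
              ← central_mul_lie (z ^ (n + 1)) U _ (fun f => (hcz f).pow_left (n + 1)),
              ← mul_assoc, ← ((hcz w).pow_left (n + 1)).eq, mul_assoc]
        _ = (((n + 2).factorial : k) * c ^ (n + 2)) • (z ^ (n + 2) * S ^ (n + 3)) := by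
            rw [step, mul_smul_comm, mul_smul_comm, smul_smul, smul_smul,
              ← mul_assoc, ← pow_succ]
            congr 1
            have hf : (((n + 2).factorial : ℕ) : k)
                = ((n + 2 : ℕ) : k) * (((n + 1).factorial : ℕ) : k) := by
              rw [show n + 2 = (n + 1) + 1 from rfl, Nat.factorial_succ]
              push_cast
              ring
            rw [hf]
            push_cast
            ring
  -- conclude
  have hp0 : 0 < p := (Fact.out : p.Prime).pos
  obtain ⟨m, rfl⟩ : ∃ m, p = m + 1 := ⟨p - 1, (Nat.succ_pred_eq_of_pos hp0).symm⟩
  have hfac : (((m + 1).factorial : k)) = 0 := by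
    rw [CharP.cast_eq_zero_iff k (m + 1)]
    exact Nat.dvd_factorial (Nat.succ_pos m) le_rfl
  have := main m
  rw [hfac, zero_mul, zero_smul] at this
  exact hwr (m + 1) _ this
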